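/- Let A be a unital C*-algebra, B a unital C*-subalgebra containing the unit, E : A → B a conditional expectation, and y ∈ A selfadjoint. For every w ∈ B with Im w strictly positive, both h_y(w) and h_y(−w^{-1}) are well defined (all required inverses exist), and Im h_y(w) ≥ 0 and Im h_y(−w^{-1}) ≥ 0. (Remark 2.4 of the paper.) -/

import Mathlib

noncomputable section
set_option linter.unusedSectionVars false

/-- The imaginary part `Im a = (a - a*)/(2i)` of an element of a complex star algebra. -/
def aIm {A : Type*} [NonUnitalRing A] [StarRing A] [Module ℂ A] (a : A) : A :=
  ((2 * Complex.I)⁻¹ : ℂ) • (a - star a)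

/-- `k > 0`: `k` is selfadjoint, nonnegative and invertible. -/
def StrictlyPos {A : Type*} [Ring A] [StarRing A] [PartialOrder A] (k : A) : Prop :=
  IsSelfAdjoint k ∧ 0 ≤ k ∧ IsUnit k

/-- The h transform `h_y(v) = v⁻¹ - E[(v⁻¹ - y)⁻¹]⁻¹`. -/
def hT {A : Type*} [Ring A] [Module ℂ A] (E : A →ₗ[ℂ] A) (y v : A) : A :=
  Ring.inverse v - Ring.inverse (E (Ring.inverse (Ring.inverse v - y)))

section Helpers

variable {A : Type*} [CStarAlgebra A] [PartialOrder A] [StarOrderedRing A]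

lemma aIm_isSelfAdjoint (a : A) : IsSelfAdjoint (aIm a) := by
  unfold aIm
  rw [IsSelfAdjoint, star_smul, star_sub, star_star,
    show (star (2 * Complex.I)⁻¹ : ℂ) = -(2 * Complex.I)⁻¹ by
      simp [Complex.ext_iff, Complex.inv_im, Complex.inv_re],
    neg_smul, ← smul_neg, neg_sub]

lemma aIm_neg (a : A) : aIm (-a) = -aIm a := by
  unfold aIm
  rw [star_neg, show -a - -star a = -(a - star a) by abel, smul_neg]

lemma aIm_sub (a b : A) : aIm (a - b) = aIm a - aIm b := by
  unfold aIm
  rw [star_sub, show a - b - (star a - star b) = (a - star a) - (b - star b) by abel, smul_sub]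

lemma re_add_I_smul' (a : A) : ((2:ℂ)⁻¹ • (a + star a)) + Complex.I • aIm a = a := by
  unfold aIm
  rw [smul_smul, show Complex.I * (2 * Complex.I)⁻¹ = (2:ℂ)⁻¹ by
      field_simp [Complex.I_ne_zero], ← smul_add,
    show a + star a + (a - star a) = (2:ℂ) • a by rw [two_smul]; abel, smul_smul]
  norm_num

lemma my_isUnit_of_left_right {x b c : A} (hbx : b * x = 1) (hxc : x * c = 1) : IsUnit x := by
  have hbc : b = c := by rw [← one_mul c, ← hbx, mul_assoc, hxc, mul_one]
  exact ⟨⟨x, c, hxc, hbc ▸ hbx⟩, rfl⟩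

lemma ringInverse_nonneg {k : A} (hk : StrictlyPos k) : 0 ≤ Ring.inverse k := by
  have hsa : star (Ring.inverse k) = Ring.inverse k := by
    rw [← Ring.inverse_star]; rw [hk.1.star_eq]
  have : Ring.inverse k = star (Ring.inverse k) * k * Ring.inverse k := by
    rw [hsa, mul_assoc, Ring.mul_inverse_cancel _ hk.2.2, mul_one]
  rw [this]
  exact star_left_conjugate_nonneg hk.2.1 _

lemma inv_sub_star_inv {a : A} (ha : IsUnit a) :
    Ring.inverse a - star (Ring.inverse a) =
      -(Ring.inverse a * (a - star a) * star (Ring.inverse a)) := by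
  have h1 : Ring.inverse a * a = 1 := Ring.inverse_mul_cancel _ ha
  have h2 : star a * star (Ring.inverse a) = 1 := by
    rw [← star_mul, Ring.inverse_mul_cancel _ ha, star_one]
  have : Ring.inverse a * (a - star a) * star (Ring.inverse a)
      = star (Ring.inverse a) - Ring.inverse a := by
    rw [mul_sub, h1, sub_mul, one_mul, mul_assoc, h2, mul_one]
  rw [this]; abel

lemma aIm_ringInverse {a : A} (ha : IsUnit a) :
    aIm (Ring.inverse a) = -(Ring.inverse a * aIm a * star (Ring.inverse a)) := by
  unfold aIm
  rw [inv_sub_star_inv ha, smul_neg, mul_smul_comm, smul_mul_assoc]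

lemma strictlyPos_conj {k u : A} (hk : StrictlyPos k) (hu : IsUnit u) :
    StrictlyPos (u * k * star u) := by
  refine ⟨?_, star_right_conjugate_nonneg hk.2.1 u, (hu.mul hk.2.2).mul hu.star⟩
  rw [IsSelfAdjoint, star_mul, star_mul, star_star, hk.1.star_eq, mul_assoc]

lemma isUnit_of_decomp {r k : A} (hrsa : star r = r) (hk : StrictlyPos k) :
    IsUnit (r + Complex.I • k) := by
  have hastar : star (r + Complex.I • k) = r - Complex.I • k := by
    rw [star_add, hrsa, star_smul, hk.1.star_eq, Complex.star_def,
      Complex.conj_I, neg_smul, ← sub_eq_add_neg]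
  set k' := Ring.inverse k with hk'def
  have hk'k : k' * k = 1 := Ring.inverse_mul_cancel _ hk.2.2
  have hkk' : k * k' = 1 := Ring.mul_inverse_cancel _ hk.2.2
  have hk'nonneg : 0 ≤ k' := ringInverse_nonneg hk
  set p : A := r * k' * r + k with hpdef
  have hp1 : 0 ≤ r * k' * r := by
    have := star_left_conjugate_nonneg hk'nonneg r
    rwa [hrsa] at this
  have hpu : IsUnit p := CStarAlgebra.isUnit_of_le k (le_add_of_nonneg_left hp1) (hk.2.2.isStrictlyPositive hk.2.1)
  have e1 : ∀ x : A, k * (k' * x) = x := fun x => by rw [← mul_assoc, hkk', one_mul]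
  have e2 : ∀ x : A, k' * (k * x) = x := fun x => by rw [← mul_assoc, hk'k, one_mul]
  have key1 : (r + Complex.I • k) * (k' * star (r + Complex.I • k)) = p := by
    rw [hastar, hpdef]
    simp only [mul_add, add_mul, mul_sub, sub_mul, smul_mul_assoc, mul_smul_comm, smul_smul,
      Complex.I_mul_I, mul_assoc, e1, e2, hk'k, hkk', mul_one, one_mul, neg_smul, one_smul,
      neg_one_smul, smul_neg, smul_add, smul_sub]
    module
  have key2 : (star (r + Complex.I • k) * k') * (r + Complex.I • k) = p := by
    rw [hastar, hpdef]
    simp only [mul_add, add_mul, mul_sub, sub_mul, smul_mul_assoc, mul_smul_comm, smul_smul,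
      Complex.I_mul_I, mul_assoc, e1, e2, hk'k, hkk', mul_one, one_mul, neg_smul, one_smul,
      neg_one_smul, smul_neg, smul_add, smul_sub]
    module
  exact my_isUnit_of_left_right
    (show (Ring.inverse p * (star (r + Complex.I • k) * k')) * (r + Complex.I • k) = 1 by
      rw [mul_assoc, key2, Ring.inverse_mul_cancel _ hpu])
    (show (r + Complex.I • k) * (k' * star (r + Complex.I • k) * Ring.inverse p) = 1 by
      rw [← mul_assoc, key1, Ring.mul_inverse_cancel _ hpu])

lemma isUnit_of_aIm {a : A} (h : StrictlyPos (aIm a)) : IsUnit a := by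
  have hrsa : star ((2:ℂ)⁻¹ • (a + star a)) = (2:ℂ)⁻¹ • (a + star a) := by
    rw [star_smul, star_add, star_star]
    norm_num [add_comm]
  have := isUnit_of_decomp hrsa h
  rwa [re_add_I_smul'] at this

lemma ringInverse_mem (B : StarSubalgebra ℂ A) (hBclosed : IsClosed (B : Set A))
    {x : A} (hx : x ∈ B) (hux : IsUnit x) : Ring.inverse x ∈ B := by
  haveI := hBclosed
  have h2 : IsUnit (⟨x, hx⟩ : B) := (StarSubalgebra.coe_isUnit (S := B)).mp hux
  obtain ⟨u, hu⟩ := h2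
  have hval : ((u : B) : A) = x := by rw [hu]
  have h1 : x * (((u⁻¹ : Bˣ) : B) : A) = 1 := by
    rw [← hval, ← MulMemClass.coe_mul, Units.mul_inv, OneMemClass.coe_one]
  have h2' : (((u⁻¹ : Bˣ) : B) : A) * x = 1 := by
    rw [← hval, ← MulMemClass.coe_mul, Units.inv_mul, OneMemClass.coe_one]
  have : Ring.inverse x = (((u⁻¹ : Bˣ) : B) : A) := by
    calc Ring.inverse x = Ring.inverse x * (x * (((u⁻¹ : Bˣ) : B) : A)) := by rw [h1, mul_one]
      _ = (Ring.inverse x * x) * (((u⁻¹ : Bˣ) : B) : A) := (mul_assoc _ _ _).symm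
      _ = (((u⁻¹ : Bˣ) : B) : A) := by rw [Ring.inverse_mul_cancel _ hux, one_mul]
  rw [this]
  exact ((u⁻¹ : Bˣ) : B).2

lemma aIm_eq_zero {a : A} (ha : IsSelfAdjoint a) : aIm a = 0 := by
  unfold aIm; rw [ha.star_eq, sub_self, smul_zero]

/-- The main step: everything asserted about `h_y(w)` itself. -/
lemma main_step {A : Type*} [CStarAlgebra A] [PartialOrder A] [StarOrderedRing A] [Nontrivial A]
    (B : StarSubalgebra ℂ A) (hBclosed : IsClosed (B : Set A))
    (E : A →ₗ[ℂ] A) (hErange : ∀ a : A, E a ∈ B)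
    (hE1 : E 1 = 1) (hEpos : ∀ a : A, 0 ≤ a → 0 ≤ E a)
    (hEbimod : ∀ b₁ ∈ B, ∀ b₂ ∈ B, ∀ a : A, E (b₁ * a * b₂) = b₁ * E a * b₂)
    (y : A) (hy : IsSelfAdjoint y)
    (w : A) (hwB : w ∈ B) (hw : StrictlyPos (aIm w)) :
    IsUnit w ∧ IsUnit (Ring.inverse w - y) ∧ IsUnit (E (Ring.inverse (Ring.inverse w - y))) ∧
      0 ≤ aIm (hT E y w) := by
  -- basic facts about E
  have hEfix : ∀ b ∈ B, E b = b := by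
    intro b hb
    have := hEbimod b hb 1 (one_mem B) 1
    simpa [hE1] using this
  have hEmono : ∀ {x z : A}, x ≤ z → E x ≤ E z := by
    intro x z h
    have := hEpos _ (sub_nonneg.mpr h)
    rw [map_sub] at this
    exact sub_nonneg.mp this
  have hEsa : ∀ s : A, IsSelfAdjoint s → IsSelfAdjoint (E s) := by
    intro s hs
    rw [← CFC.posPart_sub_negPart s hs, map_sub]
    exact ((hEpos _ (CFC.posPart_nonneg s)).isSelfAdjoint).sub
      ((hEpos _ (CFC.negPart_nonneg s)).isSelfAdjoint)
  have hEstar : ∀ a : A, E (star a) = star (E a) := by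
    intro a
    set s := a + star a with hs
    set t := Complex.I • (a - star a) with ht
    have hssa : IsSelfAdjoint s := by
      rw [hs, IsSelfAdjoint, star_add, star_star, add_comm]
    have htsa : IsSelfAdjoint t := by
      rw [ht, IsSelfAdjoint, star_smul, star_sub, star_star, Complex.star_def, Complex.conj_I,
        neg_smul, ← smul_neg, neg_sub]
    have hII : ((2⁻¹ * Complex.I) * Complex.I : ℂ) = -(2⁻¹ : ℂ) := by
      rw [mul_assoc, Complex.I_mul_I]; ring
    have hsum : a + star a + (a - star a) = (2:ℂ) • a := by rw [two_smul]; abel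
    have hsum' : a + star a - (a - star a) = (2:ℂ) • star a := by rw [two_smul]; abel
    have ha : a = (2⁻¹:ℂ) • s - ((2⁻¹ * Complex.I : ℂ)) • t := by
      rw [hs, ht, smul_smul, hII, neg_smul, sub_neg_eq_add, ← smul_add, hsum, smul_smul]
      norm_num
    have hstara : star a = (2⁻¹:ℂ) • s + ((2⁻¹ * Complex.I : ℂ)) • t := by
      rw [hs, ht, smul_smul, hII, neg_smul, ← sub_eq_add_neg, ← smul_sub, hsum', smul_smul]
      norm_num
    have hconj1 : (star (2⁻¹:ℂ)) = (2⁻¹:ℂ) := by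
      simp [Complex.ext_iff]
    have hconj2 : (star (2⁻¹ * Complex.I : ℂ)) = -(2⁻¹ * Complex.I : ℂ) := by
      simp [Complex.ext_iff]
    rw [hstara, map_add, map_smul, map_smul]
    conv_rhs => rw [ha, map_sub, map_smul, map_smul]
    rw [star_sub, star_smul, star_smul, (hEsa s hssa).star_eq, (hEsa t htsa).star_eq,
      hconj1, hconj2, neg_smul, sub_neg_eq_add]
  -- invertibility of w
  have hwu : IsUnit w := isUnit_of_aIm hw
  set k := aIm w with hkdef
  set wi := Ring.inverse w with hwidef
  have hkB : k ∈ B := SMulMemClass.smul_mem _ (sub_mem hwB (star_mem hwB))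
  have hwiB : wi ∈ B := ringInverse_mem B hBclosed hwB hwu
  have hwiu : IsUnit wi := isUnit_ringInverse.mpr hwu
  set m := wi * k * star wi with hmdef
  have hmB : m ∈ B := mul_mem (mul_mem hwiB hkB) (star_mem hwiB)
  have hm : StrictlyPos m := strictlyPos_conj hw hwiu
  have haImwi : aIm wi = -m := by rw [hwidef, aIm_ringInverse hwu, hmdef]
  have haImz : aIm (wi - y) = -m := by
    rw [aIm_sub, aIm_eq_zero hy, sub_zero, haImwi]
  have hzu : IsUnit (wi - y) := by
    have h1 : aIm (-(wi - y)) = m := by rw [aIm_neg, haImz, neg_neg]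
    have := isUnit_of_aIm (a := -(wi - y)) (h1 ▸ hm)
    exact IsUnit.neg_iff _ |>.mp this
  set g := Ring.inverse (wi - y) with hgdef
  have hgu : IsUnit g := isUnit_ringInverse.mpr hzu
  have haImg : aIm g = g * m * star g := by
    rw [hgdef, aIm_ringInverse hzu, haImz]
    rw [mul_neg, neg_mul, neg_neg, ← hgdef]
  have hkg : StrictlyPos (aIm g) := haImg ▸ strictlyPos_conj hm hgu
  set c := E g with hcdef
  have hcB : c ∈ B := hErange g
  have haImc : aIm c = E (aIm g) := by
    unfold aIm
    rw [hcdef, ← hEstar, ← map_sub, ← map_smul]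
  -- strict positivity of aIm c
  obtain ⟨ε, hε, hεle⟩ : ∃ r > 0, algebraMap ℝ A r ≤ aIm g := by
    refine (CFC.exists_pos_algebraMap_le_iff (a := aIm g) hkg.1).mpr fun x hx => ?_
    have h0 : (0:ℝ) ∉ spectrum ℝ (aIm g) := by
      rw [spectrum.zero_notMem_iff]; exact hkg.2.2
    rcases (spectrum_nonneg_of_nonneg hkg.2.1 hx).lt_or_eq with h | h
    · exact h
    · exact absurd (h ▸ hx) h0
  have hEeps : E (algebraMap ℝ A ε) = algebraMap ℝ A ε := by
    rw [IsScalarTower.algebraMap_apply ℝ ℂ A, Algebra.algebraMap_eq_smul_one, map_smul, hE1]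
  have hεnn : 0 ≤ algebraMap ℝ A ε := by
    have : algebraMap ℝ A ε = star ((Real.sqrt ε : ℝ) • (1:A)) * ((Real.sqrt ε : ℝ) • (1:A)) := by
      simp [star_smul, smul_smul, Real.mul_self_sqrt hε.le, Algebra.algebraMap_eq_smul_one]
    rw [this]
    exact star_mul_self_nonneg _
  have hεu : IsUnit (algebraMap ℝ A ε) := (isUnit_iff_ne_zero.mpr hε.ne').map (algebraMap ℝ A)
  have hcpos : StrictlyPos (aIm c) := by
    refine ⟨aIm_isSelfAdjoint c, haImc ▸ hEpos _ hkg.2.1, ?_⟩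
    refine CStarAlgebra.isUnit_of_le _ ?_ (hεu.isStrictlyPositive hεnn)
    calc algebraMap ℝ A ε = E (algebraMap ℝ A ε) := hEeps.symm
      _ ≤ E (aIm g) := hEmono hεle
      _ = aIm c := haImc.symm
  have hcu : IsUnit c := isUnit_of_aIm hcpos
  -- Cauchy–Schwarz step: c * m * star c ≤ aIm c
  have hcs : c * m * star c ≤ aIm c := by
    have h0 : 0 ≤ (g - c) * m * star (g - c) := star_right_conjugate_nonneg hm.2.1 _
    have h1 := hEpos _ h0
    have hexp : (g - c) * m * star (g - c)
        = g * m * star g - g * (m * star c) - (c * m) * star g + c * m * star c := by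
      rw [star_sub]; noncomm_ring
    have e1 : E (g * (m * star c)) = c * m * star c := by
      have := hEbimod 1 (one_mem B) (m * star c) (mul_mem hmB (star_mem hcB)) g
      rw [one_mul, one_mul] at this
      rw [this, ← hcdef, ← mul_assoc]
    have e2 : E ((c * m) * star g) = c * m * star c := by
      have := hEbimod (c * m) (mul_mem hcB hmB) 1 (one_mem B) (star g)
      rw [mul_one, mul_one] at this
      rw [this, hEstar, ← hcdef, mul_assoc]
    have e3 : E (c * m * star c) = c * m * star c :=
      hEfix _ (mul_mem (mul_mem hcB hmB) (star_mem hcB))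
    rw [hexp, map_add, map_sub, map_sub, e1, e2, e3, ← haImg, ← haImc,
      mul_assoc, sub_add_cancel] at h1
    rw [mul_assoc]
    exact sub_nonneg.mp h1
  -- conjugation
  set ci := Ring.inverse c with hcidef
  have hcic : ci * c = 1 := Ring.inverse_mul_cancel _ hcu
  have hstarci : star c * star ci = 1 := by rw [← star_mul, hcic, star_one]
  have hconj := star_left_conjugate_le_conjugate hcs (star ci)
  rw [star_star] at hconj
  have hsimp : ci * (c * m * star c) * star ci = m := by
    rw [show ci * (c * m * star c) * star ci = (ci * c) * m * (star c * star ci) by noncomm_ring,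
      hcic, hstarci, one_mul, mul_one]
  rw [hsimp] at hconj
  refine ⟨hwu, hzu, hcu, ?_⟩
  have hfinal : aIm (hT E y w) = ci * aIm c * star ci - m := by
    show aIm (wi - Ring.inverse c) = _
    rw [aIm_sub, haImwi, aIm_ringInverse hcu, ← hcidef, sub_neg_eq_add]
    abel
  rw [hfinal]
  exact sub_nonneg.mpr hconj

end Helpers

/-- Remark 2.4: for a conditional expectation `E` onto a C*-subalgebra `B`, `y = y*`
and `w ∈ B` with `Im w > 0`, both `h_y(w)` and `h_y(-w⁻¹)` are well defined, and
`Im h_y(w) ≥ 0` and `Im h_y(-w⁻¹) ≥ 0`. -/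
theorem stmt_5 {A : Type*} [CStarAlgebra A] [PartialOrder A] [StarOrderedRing A]
    (B : StarSubalgebra ℂ A) (hBclosed : IsClosed (B : Set A))
    (E : A →ₗ[ℂ] A) (hErange : ∀ a : A, E a ∈ B)
    (hE1 : E 1 = 1) (hEpos : ∀ a : A, 0 ≤ a → 0 ≤ E a)
    (hEbimod : ∀ b₁ ∈ B, ∀ b₂ ∈ B, ∀ a : A, E (b₁ * a * b₂) = b₁ * E a * b₂)
    (y : A) (hy : IsSelfAdjoint y)
    (w : A) (hwB : w ∈ B) (hw : StrictlyPos (aIm w)) :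
    (IsUnit w ∧ IsUnit (Ring.inverse w - y) ∧
      IsUnit (E (Ring.inverse (Ring.inverse w - y))) ∧
      0 ≤ aIm (hT E y w)) ∧
    (IsUnit (-(Ring.inverse w)) ∧ IsUnit (Ring.inverse (-(Ring.inverse w)) - y) ∧
      IsUnit (E (Ring.inverse (Ring.inverse (-(Ring.inverse w)) - y))) ∧
      0 ≤ aIm (hT E y (-(Ring.inverse w)))) := by
  rcases subsingleton_or_nontrivial A with hA | hA
  · refine ⟨⟨isUnit_of_subsingleton _, isUnit_of_subsingleton _, isUnit_of_subsingleton _, ?_⟩,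
      isUnit_of_subsingleton _, isUnit_of_subsingleton _, isUnit_of_subsingleton _, ?_⟩ <;>
      exact le_of_eq (Subsingleton.elim _ _)
  · have part1 := main_step B hBclosed E hErange hE1 hEpos hEbimod y hy w hwB hw
    have hwu : IsUnit w := part1.1
    have hwiB : Ring.inverse w ∈ B := ringInverse_mem B hBclosed hwB hwu
    have hwiu : IsUnit (Ring.inverse w) := isUnit_ringInverse.mpr hwu
    have hw' : StrictlyPos (aIm (-(Ring.inverse w))) := by
      rw [aIm_neg, aIm_ringInverse hwu, neg_neg]
      exact strictlyPos_conj hw hwiu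
    have part2 := main_step B hBclosed E hErange hE1 hEpos hEbimod y hy
      (-(Ring.inverse w)) (neg_mem hwiB) hw'
    exact ⟨part1, part2⟩
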